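/- Let V be a vector space over the field 𝔽₂ = ℤ/2ℤ and let D : V → V be a locally nilpotent linear endomorphism, i.e. for every v ∈ V there exists n with Dⁿ v = 0. For every finitely supported function p : ℕ → V, the function q : ℕ → V defined by q(n) = Σ_{i=1}^{n} D^{i−1}(p(n−i)) is again finitely supported, and it satisfies q(n+1) + D(q(n)) = p(n) for all n ∈ ℕ; that is, T q = p, so the assignment p ↦ q is a right inverse to T. -/

import Mathlib

/-- Construction of the right inverse `s₀` in the proof of Lemma 8.5 ('surgettiva'):
for a locally nilpotent endomorphism `D` of an `𝔽₂`-vector space `V` and a finitely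
supported `p : ℕ → V`, the function `q(n) = ∑_{i=1}^{n} D^{i-1}(p(n-i))` is finitely
supported and satisfies `q(n+1) + D(q(n)) = p(n)` for all `n`, i.e. `T q = p` where
`(T q)(n) = q(n+1) + D(q(n))`. -/
theorem right_inverse_of_shift_plus_nilpotent
    (V : Type*) [AddCommGroup V] [Module (ZMod 2) V]
    (D : V →ₗ[ZMod 2] V) (hD : ∀ v : V, ∃ n : ℕ, (D ^ n) v = 0)
    (p : ℕ →₀ V)
    (q : ℕ → V)
    (hq : ∀ n : ℕ, q n = ∑ i ∈ Finset.Icc 1 n, (D ^ (i - 1)) (p (n - i))) :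
    (Set.Finite {n : ℕ | q n ≠ 0}) ∧ ∀ n : ℕ, q (n + 1) + D (q n) = p n := by
  classical
  have key : ∀ m : ℕ, q m = ∑ j ∈ Finset.range m, (D ^ j) (p (m - 1 - j)) := by
    intro m
    rw [hq]
    refine Finset.sum_bij' (fun a _ => a - 1) (fun b _ => b + 1) ?_ ?_ ?_ ?_ ?_
    · intro a ha; rw [Finset.mem_Icc] at ha; rw [Finset.mem_range]; omega
    · intro b hb; rw [Finset.mem_range] at hb; rw [Finset.mem_Icc]; omega
    · intro a ha; rw [Finset.mem_Icc] at ha; omega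
    · intro b _; omega
    · intro a ha
      rw [Finset.mem_Icc] at ha
      have : m - a = m - 1 - (a - 1) := by omega
      rw [this]
  constructor
  · choose k hk using hD
    set M := p.support.sup (fun m => m + k (p m)) with hM
    apply Set.Finite.subset (Set.finite_Iic M)
    intro n hn
    simp only [Set.mem_setOf_eq] at hn
    simp only [Set.mem_Iic]
    by_contra h
    push_neg at h
    apply hn
    rw [hq]
    apply Finset.sum_eq_zero
    intro i hi
    rw [Finset.mem_Icc] at hi
    by_cases hp : p (n - i) = 0
    · simp [hp]
    · have hmem : n - i ∈ p.support := Finsupp.mem_support_iff.mpr hp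
      have hle : n - i + k (p (n - i)) ≤ M := Finset.le_sup (f := fun m => m + k (p m)) hmem
      have h1 : k (p (n - i)) ≤ i - 1 := by omega
      have heq : (D ^ (i - 1)) (p (n - i))
          = (D ^ (i - 1 - k (p (n - i)))) ((D ^ (k (p (n - i)))) (p (n - i))) := by
        rw [← Module.End.mul_apply, ← pow_add]
        congr 2
        omega
      rw [heq, hk, map_zero]
  · intro n
    have h2 : ∀ x : V, x + x = 0 := by
      intro x
      calc x + x = (2 : ZMod 2) • x := (two_smul _ x).symm
        _ = (0 : ZMod 2) • x := by rw [show (2 : ZMod 2) = 0 from rfl]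
        _ = 0 := zero_smul _ x
    rw [key (n + 1), Finset.sum_range_succ']
    simp only [pow_zero, Module.End.one_apply, pow_succ']
    have hsum : ∑ i ∈ Finset.range n, (D ^ (i + 1)) (p (n + 1 - 1 - (i + 1)))
        = D (q n) := by
      rw [key n, map_sum]
      apply Finset.sum_congr rfl
      intro i _
      rw [pow_succ', Module.End.mul_apply]
      have : n + 1 - 1 - (i + 1) = n - 1 - i := by omega
      rw [this]
    have hgoal : ∑ i ∈ Finset.range n, (D ^ (i + 1)) (p (n + 1 - 1 - (i + 1))) + p (n + 1 - 1 - 0) + D (q n) = p n := by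
      rw [hsum]
      have : n + 1 - 1 - 0 = n := by omega
      rw [this]
      abel_nf
      rw [show (2 : ℤ) • D (q n) = D (q n) + D (q n) from two_zsmul _, h2]
      simp
    simpa [pow_succ'] using hgoal
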